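/- arXiv:1705.07965 — 4 statements merged into one kernel-verified Lean document; each statement's English description precedes it below -/
import Mathlib

section
/- Let M be a compact smooth manifold without boundary, X a smooth vector field on M with flow φ_t, U a C¹ vector field on M, and r : M → ℝ a continuous function such that dφ_t(z)·U(z) = exp(∫_0^t r(φ_s(z)) ds)·U(φ_t(z)) for all t ∈ ℝ, z ∈ M. Then the Lie bracket satisfies [X,U] = −r·U; equivalently, for every f ∈ C^∞(M) and z ∈ M, the map t ↦ (Uf)(φ_t(z)) is differentiable at t = 0 and its derivative equals (U(Xf))(z) − r(z)·(Uf)(z), where Uf := df(U) and Xf := df(X). -/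
open Filter
open scoped Manifold Topology

private lemma mfderiv_eq_fderiv_aux
    {E : Type*} [NormedAddCommGroup E] [NormedSpace ℝ E]
    {HM : Type*} [TopologicalSpace HM] {I : ModelWithCorners ℝ E HM} [I.Boundaryless]
    {M : Type*} [TopologicalSpace M] [ChartedSpace HM M]
    {F : M → ℝ} {z : M} (hF : MDifferentiableAt I 𝓘(ℝ) F z) (v : TangentSpace I z) :
    mfderiv I 𝓘(ℝ) F z v = fderiv ℝ (F ∘ (extChartAt I z).symm) (extChartAt I z z) v := by
  simp only [mfderiv, hF, ↓reduceIte]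
  simp only [writtenInExtChartAt, I.range_eq_univ, fderivWithin_univ, extChartAt,
    OpenPartialHomeomorph.extend, modelWithCornersSelf_partialEquiv, PartialEquiv.trans_refl,
    OpenPartialHomeomorph.toFun_eq_coe, PartialEquiv.coe_trans, PartialEquiv.coe_trans_symm,
    OpenPartialHomeomorph.coe_coe_symm, ModelWithCorners.toPartialEquiv_coe_symm,
    ModelWithCorners.toPartialEquiv_coe, Function.comp_assoc]
  rfl

/-- If `U` is a `C¹` vector field with
`dφ_t(z)·U(z) = exp(∫_0^t r(φ_s z) ds)·U(φ_t z)` for a continuous function `r`, then the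
Lie bracket satisfies `[X,U] = −r·U`: for every smooth `f` and every `z`, the map
`t ↦ (Uf)(φ_t z)` is differentiable at `0` with derivative `(U(Xf))(z) − r(z)·(Uf)(z)`. -/
theorem stmt_2
    {E : Type*} [NormedAddCommGroup E] [NormedSpace ℝ E]
    {HM : Type*} [TopologicalSpace HM] {I : ModelWithCorners ℝ E HM} [I.Boundaryless]
    {M : Type*} [TopologicalSpace M] [ChartedSpace HM M] [IsManifold I ((⊤ : ℕ∞) : WithTop ℕ∞) M]
    [CompactSpace M]
    (X : ∀ z : M, TangentSpace I z)
    (hX : ContMDiff I I.tangent (⊤ : ℕ∞) fun z => (⟨z, X z⟩ : TangentBundle I M))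
    (φ : ℝ → M → M)
    (hφ0 : ∀ z, φ 0 z = z)
    (hφadd : ∀ t s z, φ (t + s) z = φ t (φ s z))
    (hφsmooth : ContMDiff (𝓘(ℝ).prod I) I (⊤ : ℕ∞) fun p : ℝ × M => φ p.1 p.2)
    (hφflow : ∀ z : M, IsMIntegralCurve (fun t => φ t z) X)
    (U : ∀ z : M, TangentSpace I z)
    (hU : ContMDiff I I.tangent 1 fun z => (⟨z, U z⟩ : TangentBundle I M))
    (r : M → ℝ) (hr : Continuous r)
    (hconj : ∀ (t : ℝ) (z : M), mfderiv I I (φ t) z (U z) =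
      Real.exp (∫ s in (0:ℝ)..t, r (φ s z)) • U (φ t z)) :
    ∀ f : M → ℝ, ContMDiff I 𝓘(ℝ) (⊤ : ℕ∞) f → ∀ z : M,
      HasDerivAt (fun t => (show ℝ from mfderiv I 𝓘(ℝ) f (φ t z) (U (φ t z))))
        ((show ℝ from mfderiv I 𝓘(ℝ) (fun w => show ℝ from mfderiv I 𝓘(ℝ) f w (X w)) z (U z))
          - r z * (show ℝ from mfderiv I 𝓘(ℝ) f z (U z))) 0 := by
  intro f hf z
  classical
  set e := extChartAt I z with he
  set x0 : E := e z with hx0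
  set Xf : M → ℝ := fun w => mfderiv I 𝓘(ℝ) f w (X w) with hXf
  set ψ : ℝ × E → M := fun p => φ p.1 (e.symm p.2) with hψ
  set G : ℝ × E → ℝ := fun p => f (ψ p) with hGdef
  -- basic differentiability facts
  have hfd : ∀ w, MDifferentiableAt I 𝓘(ℝ) f w := fun w => (hf w).mdifferentiableAt (by simp)
  have hφt : ∀ t : ℝ, ContMDiff I I (⊤ : ℕ∞) (φ t) := fun t =>
    hφsmooth.comp (contMDiff_const.prodMk contMDiff_id)
  -- smoothness of G at (0, x0)
  have hsymm_smooth : ContMDiffAt 𝓘(ℝ, E) I (⊤ : ℕ∞) e.symm x0 :=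
    (contMDiffOn_extChartAt_symm z).contMDiffAt (extChartAt_target_mem_nhds z)
  have hψsm : ContMDiffAt (𝓘(ℝ, ℝ).prod 𝓘(ℝ, E)) I (⊤ : ℕ∞) ψ (0, x0) := by
    have h9 : ContMDiffAt (𝓘(ℝ, ℝ).prod 𝓘(ℝ, E)) I (⊤ : ℕ∞) (fun p : ℝ × E => e.symm p.2) (0, x0) :=
      ContMDiffAt.comp (I' := 𝓘(ℝ, E)) (0, x0) hsymm_smooth contMDiffAt_snd
    exact ContMDiffAt.comp (I' := 𝓘(ℝ, ℝ).prod I) _ (hφsmooth _)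
      ((contMDiffAt_fst).prodMk h9)
  have hGm : ContMDiffAt (𝓘(ℝ, ℝ).prod 𝓘(ℝ, E)) 𝓘(ℝ, ℝ) (⊤ : ℕ∞) G (0, x0) :=
    (hf _).comp _ hψsm
  have hGc : ContDiffAt ℝ 2 G (0, x0) := by
    have h8 : ContMDiffAt 𝓘(ℝ, ℝ × E) 𝓘(ℝ, ℝ) 2 G (0, x0) := by
      rw [modelWithCornersSelf_prod, ← chartedSpaceSelf_prod]; exact hGm.of_le (WithTop.coe_le_coe.mpr le_top)
    exact h8.contDiffAt
  obtain ⟨s, hs_nhds, hGs⟩ : ∃ s ∈ 𝓝 ((0 : ℝ), x0), ContDiffOn ℝ 2 G s :=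
    hGc.contDiffOn le_rfl (by simp)
  obtain ⟨T, hTs, hT_open, hpT⟩ := mem_nhds_iff.1 hs_nhds
  have hGdiff : ∀ p ∈ T, DifferentiableAt ℝ G p := fun p hp =>
    (((hGs.mono hTs).differentiableOn (by norm_num)).differentiableAt (hT_open.mem_nhds hp))
  -- pointwise time-derivative identity
  have key : ∀ p : ℝ × E, DifferentiableAt ℝ G p → fderiv ℝ G p (1, 0) = Xf (ψ p) := by
    rintro ⟨t, x⟩ hd
    have hγ := hφflow (e.symm x) t
    have hcomp := ((hfd (φ t (e.symm x))).hasMFDerivAt).comp t hγ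
    have hcr : (mfderiv I 𝓘(ℝ) f (φ t (e.symm x))).comp
        ((1 : ℝ →L[ℝ] ℝ).smulRight (X (φ t (e.symm x))))
        = (1 : ℝ →L[ℝ] ℝ).smulRight (Xf (φ t (e.symm x))) := by
      refine ContinuousLinearMap.ext fun s => ?_
      show (mfderiv I 𝓘(ℝ) f (φ t (e.symm x))) (s • X (φ t (e.symm x)))
          = s • (Xf (φ t (e.symm x)))
      exact (mfderiv I 𝓘(ℝ) f (φ t (e.symm x))).map_smul s _
    beta_reduce at hcomp
    erw [hcr] at hcomp
    have h1 : HasDerivAt (f ∘ fun s => φ s (e.symm x)) (Xf (φ t (e.symm x))) t := by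
      rw [hasDerivAt_iff_hasFDerivAt]
      exact hcomp.hasFDerivAt
    have h3 : HasFDerivAt (fun s : ℝ => (s, x)) (ContinuousLinearMap.inl ℝ ℝ E) t :=
      hasFDerivAt_prodMk_left t x
    have h2 : HasDerivAt (fun s => G (s, x)) (fderiv ℝ G (t, x) (1, 0)) t := by
      have h2' := (hd.hasFDerivAt.comp t h3).hasDerivAt
      exact h2'
    have h4 : (fun s => G (s, x)) = (f ∘ fun s => φ s (e.symm x)) := rfl
    rw [h4] at h2
    exact h2.unique h1
  -- second derivative
  have hB : ContDiffAt ℝ 1 (fderiv ℝ G) (0, x0) := hGc.fderiv_right (by norm_num)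
  have hBd : DifferentiableAt ℝ (fderiv ℝ G) (0, x0) := hB.differentiableAt one_ne_zero
  set A := fderiv ℝ (fderiv ℝ G) ((0 : ℝ), x0) with hA
  have hAsymm : ∀ v w, A v w = A w v := hGc.isSymmSndFDerivAt (by simp)
  have happly : ∀ v : ℝ × E, HasFDerivAt (fun p : ℝ × E => fderiv ℝ G p v)
      ((ContinuousLinearMap.apply ℝ ℝ v).comp A) (0, x0) := fun v =>
    (ContinuousLinearMap.apply ℝ ℝ v).hasFDerivAt.comp _ hBd.hasFDerivAt
  -- derivative of k(t) = ∂₂G(t,x0)(0, U z)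
  have hk : HasDerivAt (fun t : ℝ => fderiv ℝ G (t, x0) (0, U z)) (A (1, 0) (0, U z)) 0 := by
    have h3 : HasFDerivAt (fun t : ℝ => (t, x0)) (ContinuousLinearMap.inl ℝ ℝ E) 0 :=
      hasFDerivAt_prodMk_left 0 x0
    have h5 := ((happly (0, U z)).comp 0 h3).hasDerivAt
    exact h5
  -- g(t) = mfderiv (f ∘ φ t) z (U z) agrees with k near 0
  set g : ℝ → ℝ := fun t => mfderiv I 𝓘(ℝ) (f ∘ φ t) z (U z) with hgdef
  have hTt : ∀ᶠ t : ℝ in 𝓝 0, ((t : ℝ), x0) ∈ T :=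
    (continuous_id.prodMk continuous_const).continuousAt.eventually_mem
      (hT_open.mem_nhds hpT)
  have hgk : g =ᶠ[𝓝 0] fun t => fderiv ℝ G (t, x0) (0, U z) := by
    filter_upwards [hTt] with t ht
    have hmd : MDifferentiableAt I 𝓘(ℝ) (f ∘ φ t) z :=
      (hfd (φ t z)).comp z ((hφt t z).mdifferentiableAt (by simp))
    have e1 := mfderiv_eq_fderiv_aux hmd (U z)
    have h4 : HasFDerivAt (fun x => G (t, x))
        ((fderiv ℝ G (t, x0)).comp (ContinuousLinearMap.inr ℝ ℝ E)) x0 :=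
      (hGdiff _ ht).hasFDerivAt.comp x0 (hasFDerivAt_prodMk_right t x0)
    have e2 : ((f ∘ φ t) ∘ e.symm) = fun x => G (t, x) := rfl
    rw [hgdef]
    simp only []
    rw [e1, e2, h4.fderiv]
    rfl
  -- H(p) = ∂₁G(p) equals Xf ∘ ψ near (0,x0)
  have hH : HasFDerivAt (fun p : ℝ × E => fderiv ℝ G p (1, 0))
      ((ContinuousLinearMap.apply ℝ ℝ ((1 : ℝ), (0 : E))).comp A) (0, x0) := happly (1, 0)
  have hHeq : (fun p : ℝ × E => fderiv ℝ G p (1, 0)) =ᶠ[𝓝 ((0 : ℝ), x0)] (Xf ∘ ψ) := by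
    filter_upwards [hT_open.mem_nhds hpT] with p hp
    exact key p (hGdiff p hp)
  have hXψd : DifferentiableAt ℝ (Xf ∘ ψ) (0, x0) :=
    hH.differentiableAt.congr_of_eventuallyEq hHeq.symm
  have hfdXψ : fderiv ℝ (Xf ∘ ψ) ((0 : ℝ), x0)
      = (ContinuousLinearMap.apply ℝ ℝ ((1 : ℝ), (0 : E))).comp A := by
    rw [← hHeq.fderiv_eq, hH.fderiv]
  have hι : HasFDerivAt (fun x : E => ((0 : ℝ), x)) (ContinuousLinearMap.inr ℝ ℝ E) x0 :=
    hasFDerivAt_prodMk_right 0 x0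
  have hcompd : HasFDerivAt (Xf ∘ e.symm)
      ((fderiv ℝ (Xf ∘ ψ) ((0 : ℝ), x0)).comp (ContinuousLinearMap.inr ℝ ℝ E)) x0 := by
    have h5 := hXψd.hasFDerivAt.comp x0 hι
    have e3 : (Xf ∘ ψ) ∘ (fun x : E => ((0 : ℝ), x)) = Xf ∘ e.symm := by
      funext x
      simp [hψ, hφ0, Function.comp]
    rwa [e3] at h5
  have hval : A (1, 0) (0, U z) = fderiv ℝ (Xf ∘ e.symm) x0 (U z) := by
    rw [hcompd.fderiv, hfdXψ]
    exact hAsymm (1, 0) (0, U z)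
  -- MDifferentiability of Xf at z and the value of the mixed derivative
  have hz_src : e.source ∈ 𝓝 z := extChartAt_source_mem_nhds z
  have hXfz : MDifferentiableAt I 𝓘(ℝ) Xf z := by
    have h6 : MDifferentiableAt I 𝓘(ℝ) ((Xf ∘ e.symm) ∘ e) z :=
      (hcompd.differentiableAt.mdifferentiableAt).comp z
        ((contMDiffAt_extChartAt (n := 1)).mdifferentiableAt one_ne_zero)
    apply h6.congr_of_eventuallyEq
    filter_upwards [hz_src] with w hw
    simp [Function.comp, e.left_inv hw]
  have hXfval : (mfderiv I 𝓘(ℝ) Xf z (U z) : ℝ) = A (1, 0) (0, U z) := by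
    rw [mfderiv_eq_fderiv_aux hXfz (U z)]
    exact hval.symm
  have hg0 : HasDerivAt g (mfderiv I 𝓘(ℝ) Xf z (U z)) 0 := by
    rw [hXfval]
    exact hk.congr_of_eventuallyEq hgk
  -- the integral term
  set a : ℝ → ℝ := fun t => ∫ s in (0:ℝ)..t, r (φ s z) with hadef
  have hρ : Continuous fun s : ℝ => r (φ s z) :=
    hr.comp (hφsmooth.continuous.comp (continuous_id.prodMk continuous_const))
  have haD : HasDerivAt a (r z) 0 := by
    have h7 := intervalIntegral.integral_hasDerivAt_right (hρ.intervalIntegrable 0 0)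
      (hρ.stronglyMeasurableAtFilter _ _) hρ.continuousAt
    simpa [hadef, hφ0] using h7
  have ha0 : a 0 = 0 := intervalIntegral.integral_same
  -- conjugation identity
  have hgh : ∀ t : ℝ, g t = Real.exp (a t) * (show ℝ from mfderiv I 𝓘(ℝ) f (φ t z) (U (φ t z))) := by
    intro t
    have hcmp := mfderiv_comp z (hfd (φ t z)) ((hφt t z).mdifferentiableAt (by simp))
    have e4 : g t = mfderiv I 𝓘(ℝ) f (φ t z) (mfderiv I I (φ t) z (U z)) := by
      rw [hgdef]
      simp only []
      rw [hcmp]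
      rfl
    rw [e4, hconj t z, map_smul]; rfl
  have hfinal : ∀ t : ℝ, (mfderiv I 𝓘(ℝ) f (φ t z) (U (φ t z)) : ℝ)
      = Real.exp (-(a t)) * g t := by
    intro t
    rw [hgh t, ← mul_assoc, ← Real.exp_add, neg_add_cancel, Real.exp_zero, one_mul]
  have hexp : HasDerivAt (fun t => Real.exp (-(a t))) (-(r z)) 0 := by
    have h7 := (haD.neg).exp
    simpa [ha0] using h7
  have hg00 : g 0 = (show ℝ from mfderiv I 𝓘(ℝ) f z (U z)) := by
    have e5 : f ∘ φ 0 = f := by funext w; simp [hφ0]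
    show (mfderiv I 𝓘(ℝ) (f ∘ φ 0) z : TangentSpace I z →L[ℝ] ℝ) (U z) = _
    rw [e5]
  have hmain := hexp.mul hg0
  have hfun : (fun t => (show ℝ from mfderiv I 𝓘(ℝ) f (φ t z) (U (φ t z))))
      = fun t => Real.exp (-(a t)) * g t := funext hfinal
  rw [hfun]
  refine hmain.congr_deriv ?_
  rw [hg00, ha0]
  simp
  exact (by intro p q; ring : ∀ p q : ℝ, -r z * p + 1 * q = q - r z * p) _ _
end

section
/- Let M be a compact smooth manifold without boundary, X a smooth vector field with flow φ_t, and W : M → ℝ continuous with W_max := lim_{t→+∞} sup_{z∈M} (1/t)∫_{-t}^0 W(φ_s(z)) ds. Let λ ∈ ℂ with Re(λ) > W_max. If ω : M → ℂ is continuous and for every z ∈ M the map t ↦ ω(φ_t(z)) is differentiable with derivative (d/dt) ω(φ_t(z)) = (W(φ_t(z)) − λ)·ω(φ_t(z)) for all t ∈ ℝ, then ω ≡ 0. In other words, the operator P' − λ = −X + W − λ has no nonzero continuous solutions of (P'−λ)ω = 0 in the region Re(λ) > W_max. -/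
open Filter
open scoped Manifold Topology

/-- For a continuous potential `W` with upper average `W_max` and
`Re λ > W_max`, the operator `P' − λ = −X + W − λ` has no nonzero continuous solution of
`(P'−λ)ω = 0`: if `ω` is continuous and `(d/dt) ω(φ_t z) = (W(φ_t z) − λ) ω(φ_t z)` for all
`t` and `z`, then `ω ≡ 0`. -/
theorem stmt_10
    {E : Type*} [NormedAddCommGroup E] [NormedSpace ℝ E]
    {HM : Type*} [TopologicalSpace HM] {I : ModelWithCorners ℝ E HM} [I.Boundaryless]
    {M : Type*} [TopologicalSpace M] [ChartedSpace HM M] [IsManifold I (⊤ : ℕ∞) M]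
    [CompactSpace M]
    (X : ∀ z : M, TangentSpace I z)
    (hX : ContMDiff I I.tangent (⊤ : ℕ∞) fun z => (⟨z, X z⟩ : TangentBundle I M))
    (φ : ℝ → M → M)
    (hφ0 : ∀ z, φ 0 z = z)
    (hφadd : ∀ t s z, φ (t + s) z = φ t (φ s z))
    (hφsmooth : ContMDiff (𝓘(ℝ).prod I) I (⊤ : ℕ∞) fun p : ℝ × M => φ p.1 p.2)
    (hφflow : ∀ z : M, IsMIntegralCurve (fun t => φ t z) X)
    (W : M → ℝ) (hW : Continuous W)
    (Wmax : ℝ)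
    (hWmax : Tendsto (fun t : ℝ => ⨆ z : M, (1/t) * ∫ s in (-t)..(0:ℝ), W (φ s z))
      atTop (𝓝 Wmax))
    (lam : ℂ) (hlam : Wmax < lam.re)
    (ω : M → ℂ) (hω : Continuous ω)
    (hode : ∀ (z : M) (t : ℝ), HasDerivAt (fun u => ω (φ u z))
      (((W (φ t z) : ℂ) - lam) * ω (φ t z)) t) :
    ∀ z : M, ω z = 0 := by
  intro z
  have hφc : ∀ w : M, Continuous fun s : ℝ => φ s w := fun w =>
    hφsmooth.continuous.comp (continuous_id.prodMk continuous_const)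
  have hgc : ∀ w : M, Continuous fun s : ℝ => W (φ s w) := fun w => hW.comp (hφc w)
  have hgcC : ∀ w : M, Continuous fun s : ℝ => ((W (φ s w) : ℂ)) := fun w =>
    Complex.continuous_ofReal.comp (hgc w)
  -- the explicit solution formula
  have key : ∀ (w : M) (t : ℝ),
      ω (φ t w) = ω w * Complex.exp (∫ s in (0:ℝ)..t, ((W (φ s w) : ℂ) - lam)) := by
    intro w t
    set g : ℝ → ℂ := fun s => ((W (φ s w) : ℂ) - lam) with hg
    have hgC : Continuous g := (hgcC w).sub continuous_const
    have hI : ∀ u : ℝ, HasDerivAt (fun v => ∫ s in (0:ℝ)..v, g s) (g u) u := fun u =>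
      intervalIntegral.integral_hasDerivAt_right (hgC.intervalIntegrable _ _)
        (hgC.stronglyMeasurableAtFilter _ _) hgC.continuousAt
    set h : ℝ → ℂ := fun u => ω (φ u w) * Complex.exp (-(∫ s in (0:ℝ)..u, g s)) with hh
    have hh' : ∀ u : ℝ, HasDerivAt h 0 u := by
      intro u
      have h2 : HasDerivAt (fun v => Complex.exp (-(∫ s in (0:ℝ)..v, g s)))
          (Complex.exp (-(∫ s in (0:ℝ)..u, g s)) * (-(g u))) u := (hI u).neg.cexp
      have h3 := (hode w u).mul h2
      convert h3 using 1
      · rfl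
      · rfl
      · simp only [hg]
        ring
    have hconst : h t = h 0 :=
      is_const_of_deriv_eq_zero (fun u => (hh' u).differentiableAt)
        (fun u => (hh' u).deriv) t 0
    simp only [hh, hφ0, intervalIntegral.integral_same, neg_zero, Complex.exp_zero,
      mul_one] at hconst
    have h4 : ω (φ t w) * Complex.exp (-(∫ s in (0:ℝ)..t, g s))
        * Complex.exp (∫ s in (0:ℝ)..t, g s)
        = ω w * Complex.exp (∫ s in (0:ℝ)..t, g s) := by rw [hconst]
    rwa [mul_assoc, ← Complex.exp_add, neg_add_cancel, Complex.exp_zero, mul_one] at h4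
  -- rewrite: ω z in terms of ω (φ (-t) z)
  have key2 : ∀ t : ℝ, ω z = ω (φ (-t) z) *
      Complex.exp ((↑(∫ s in (-t)..(0:ℝ), W (φ s z)) : ℂ) - (t : ℂ) * lam) := by
    intro t
    have h1 := key (φ (-t) z) t
    have h2 : φ t (φ (-t) z) = z := by
      rw [← hφadd]; simp [hφ0]
    have h3 : ∀ s : ℝ, φ s (φ (-t) z) = φ (s + -t) z := fun s => (hφadd s (-t) z).symm
    rw [h2] at h1
    have h4 : (∫ s in (0:ℝ)..t, ((W (φ s (φ (-t) z)) : ℂ) - lam))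
        = (↑(∫ s in (-t)..(0:ℝ), W (φ s z)) : ℂ) - (t : ℂ) * lam := by
      have e1 : (∫ s in (0:ℝ)..t, ((W (φ s (φ (-t) z)) : ℂ) - lam))
          = ∫ s in (0:ℝ)..t, ((fun u : ℝ => ((W (φ u z) : ℂ) - lam)) (s + -t)) := by
        congr 1; ext s; rw [h3]
      rw [e1, intervalIntegral.integral_comp_add_right
        (fun u : ℝ => ((W (φ u z) : ℂ) - lam)) (-t)]
      have e2 : (0:ℝ) + -t = -t := by ring
      have e3 : t + -t = (0:ℝ) := by ring
      rw [e2, e3, intervalIntegral.integral_sub ((hgcC z).intervalIntegrable _ _)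
        intervalIntegrable_const, intervalIntegral.integral_const,
        intervalIntegral.integral_ofReal]
      simp [sub_neg_eq_add, Complex.real_smul]
    rw [h4] at h1
    exact h1
  -- bounds
  obtain ⟨C, hC0, hC⟩ : ∃ C, 0 ≤ C ∧ ∀ w : M, ‖ω w‖ ≤ C := by
    obtain ⟨w0, -, hw0⟩ := isCompact_univ.exists_isMaxOn ⟨z, trivial⟩
      (hω.norm.continuousOn)
    exact ⟨‖ω w0‖, norm_nonneg _, fun w => hw0 (Set.mem_univ w)⟩
  obtain ⟨CW, hCW⟩ : ∃ CW, ∀ w : M, |W w| ≤ CW := by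
    obtain ⟨w0, -, hw0⟩ := isCompact_univ.exists_isMaxOn ⟨z, trivial⟩
      (hW.abs.continuousOn)
    exact ⟨|W w0|, fun w => hw0 (Set.mem_univ w)⟩
  set ε : ℝ := (lam.re - Wmax) / 2 with hε
  have hεpos : 0 < ε := by rw [hε]; linarith
  have hev : ∀ᶠ t : ℝ in atTop,
      (⨆ w : M, (1/t) * ∫ s in (-t)..(0:ℝ), W (φ s w)) ≤ Wmax + ε :=
    hWmax.eventually_le_const (by linarith)
  have hbdd : ∀ t : ℝ, 0 < t →
      BddAbove (Set.range fun w : M => (1/t) * ∫ s in (-t)..(0:ℝ), W (φ s w)) := by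
    intro t ht
    refine ⟨CW, ?_⟩
    rintro x ⟨w, rfl⟩
    have hint : (∫ s in (-t)..(0:ℝ), W (φ s w)) ≤ t * CW := by
      have := intervalIntegral.integral_mono_on (μ := MeasureTheory.volume) (by linarith : (-t) ≤ 0)
        ((hgc w).intervalIntegrable _ _) intervalIntegrable_const
        (fun s _ => (abs_le.mp (hCW (φ s w))).2)
      simpa using this
    calc (1/t) * ∫ s in (-t)..(0:ℝ), W (φ s w) ≤ (1/t) * (t * CW) :=
          mul_le_mul_of_nonneg_left hint (by positivity)
      _ = CW := by field_simp
  -- eventual bound on ‖ω z‖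
  have hbound : ∀ᶠ t : ℝ in atTop, ‖ω z‖ ≤ C * Real.exp (-(ε * t)) := by
    filter_upwards [hev, eventually_gt_atTop (0:ℝ)] with t hsup ht
    have h1 : (1/t) * (∫ s in (-t)..(0:ℝ), W (φ s z)) ≤ Wmax + ε :=
      le_trans (le_ciSup (hbdd t ht) z) hsup
    have h2 : (∫ s in (-t)..(0:ℝ), W (φ s z)) ≤ t * (Wmax + ε) := by
      have h := mul_le_mul_of_nonneg_left h1 ht.le
      rwa [show t * ((1/t) * ∫ s in (-t)..(0:ℝ), W (φ s z))
          = ∫ s in (-t)..(0:ℝ), W (φ s z) from by field_simp] at h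
    have h4 : ‖ω z‖ = ‖ω (φ (-t) z)‖ *
        Real.exp ((∫ s in (-t)..(0:ℝ), W (φ s z)) - t * lam.re) := by
      rw [key2 t, norm_mul]
      congr 1
      rw [Complex.norm_exp]
      congr 1
      simp [Complex.sub_re, Complex.mul_re]
    rw [h4]
    have h5 : Real.exp ((∫ s in (-t)..(0:ℝ), W (φ s z)) - t * lam.re)
        ≤ Real.exp (-(ε * t)) := by
      apply Real.exp_le_exp.mpr
      have e : t * (Wmax + ε) - t * lam.re = -(ε * t) := by rw [hε]; ring
      linarith [h2, e.le, e.ge]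
    exact mul_le_mul (hC _) h5 (Real.exp_nonneg _) hC0
  have hlim : Tendsto (fun t : ℝ => C * Real.exp (-(ε * t))) atTop (𝓝 0) := by
    have l1 : Tendsto (fun t : ℝ => ε * t) atTop atTop :=
      Tendsto.const_mul_atTop hεpos tendsto_id
    have l2 : Tendsto (fun t : ℝ => -(ε * t)) atTop atBot :=
      tendsto_neg_atTop_atBot.comp l1
    have l3 : Tendsto (fun t : ℝ => Real.exp (-(ε * t))) atTop (𝓝 0) :=
      Real.tendsto_exp_atBot.comp l2
    simpa using l3.const_mul C
  have hle : ‖ω z‖ ≤ 0 := ge_of_tendsto hlim hbound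
  simpa using le_antisymm hle (norm_nonneg _)
end

section
/- Let M be a compact smooth manifold without boundary, X a smooth vector field with flow φ_t, and m a finite Borel measure invariant under every φ_t. Let U_- be a continuous vector field, r_- ∈ C(M), and D ∈ C(M) such that: (i) for every f ∈ C^∞(M), ∫_M (U_-f) dm = −∫_M D·f dm (i.e. D is the divergence of U_- with respect to m); (ii) for every f ∈ C^∞(M), the function U_-f is differentiable along the flow with X(U_-f) = U_-(Xf) − r_-·(U_-f) (the commutation relation [X,U_-] = −r_- U_-), and X(U_-f) is continuous. Then D is a weak solution of (−X − r_-)D = U_-(r_-) with respect to m: for every f ∈ C^∞(M), ∫_M D·(Xf − r_-·f) dm = −∫_M r_-·(U_-f + D·f) dm. -/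
open Filter MeasureTheory
open scoped Manifold Topology

theorem snd_smooth_tb : ContMDiff 𝓘(ℝ).tangent 𝓘(ℝ) (⊤ : ℕ∞) (fun p : TangentBundle 𝓘(ℝ) ℝ => p.2) := by
  refine contMDiff_iff.mpr ?_
  refine ⟨continuous_snd.comp (tangentBundleModelSpaceHomeomorph 𝓘(ℝ)).continuous, fun x y => ?_⟩
  simp only [mfld_simps]
  exact contDiff_snd.contDiffOn

theorem Xf_smooth'
    {E : Type*} [NormedAddCommGroup E] [NormedSpace ℝ E]
    {HM : Type*} [TopologicalSpace HM] {I : ModelWithCorners ℝ E HM}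
    {M : Type*} [TopologicalSpace M] [ChartedSpace HM M] [IsManifold I (⊤ : ℕ∞) M]
    (f : M → ℝ) (hf : ContMDiff I 𝓘(ℝ) (⊤ : ℕ∞) f)
    (X : ∀ z : M, TangentSpace I z)
    (hX : ContMDiff I I.tangent (⊤ : ℕ∞) fun z => (⟨z, X z⟩ : TangentBundle I M)) :
    ContMDiff I 𝓘(ℝ) (⊤ : ℕ∞) (fun z => (show ℝ from mfderiv I 𝓘(ℝ) f z (X z))) := by
  have h1 : ContMDiff I.tangent 𝓘(ℝ).tangent (⊤ : ℕ∞) (tangentMap I 𝓘(ℝ) f) :=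
    hf.contMDiff_tangentMap (by simp)
  exact snd_smooth_tb.comp (h1.comp hX)

theorem Xf_cont'
    {E : Type*} [NormedAddCommGroup E] [NormedSpace ℝ E]
    {HM : Type*} [TopologicalSpace HM] {I : ModelWithCorners ℝ E HM}
    {M : Type*} [TopologicalSpace M] [ChartedSpace HM M] [IsManifold I (⊤ : ℕ∞) M]
    (f : M → ℝ) (hf : ContMDiff I 𝓘(ℝ) (⊤ : ℕ∞) f)
    (X : ∀ z : M, TangentSpace I z)
    (hX : Continuous fun z => (⟨z, X z⟩ : TangentBundle I M)) :
    Continuous (fun z => (show ℝ from mfderiv I 𝓘(ℝ) f z (X z))) := by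
  have h1 : Continuous (tangentMap I 𝓘(ℝ) f) := hf.continuous_tangentMap (by simp)
  exact (continuous_snd.comp (tangentBundleModelSpaceHomeomorph 𝓘(ℝ)).continuous).comp
    (h1.comp hX)

theorem flow_integral_zero
    {M : Type*} [TopologicalSpace M] [CompactSpace M] [MeasurableSpace M] [BorelSpace M]
    (φ : ℝ → M → M) (hφ0 : ∀ z, φ 0 z = z) (hφadd : ∀ t s z, φ (t + s) z = φ t (φ s z))
    (hφcont : Continuous fun p : ℝ × M => φ p.1 p.2)
    (m : Measure M) [IsFiniteMeasure m] (hm : ∀ t : ℝ, MeasurePreserving (φ t) m m)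
    (g h : M → ℝ) (hg : Continuous g) (hh : Continuous h)
    (hderiv : ∀ z, HasDerivAt (fun t => g (φ t z)) (h z) 0) :
    ∫ z, h z ∂m = 0 := by
  have hderiv' : ∀ z (s : ℝ), HasDerivAt (fun t => g (φ t z)) (h (φ s z)) s := by
    intro z s
    have h1 : HasDerivAt (fun t : ℝ => t - s) 1 s := (hasDerivAt_id s).sub_const s
    have h2 : HasDerivAt ((fun t => g (φ t (φ s z))) ∘ fun t : ℝ => t - s)
        (h (φ s z) * 1) s := by
      apply HasDerivAt.comp
      · simpa using hderiv (φ s z)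
      · exact h1
    have h3 : ((fun t => g (φ t (φ s z))) ∘ fun t : ℝ => t - s) = fun t => g (φ t z) := by
      funext t
      simp only [Function.comp]
      rw [← hφadd]
      ring_nf
    rw [h3, mul_one] at h2
    exact h2
  have hφz : ∀ z : M, Continuous fun t : ℝ => φ t z := fun z =>
    hφcont.comp (continuous_id.prodMk continuous_const)
  have key : ∀ z, (∫ s in (0:ℝ)..1, h (φ s z)) = g (φ 1 z) - g z := by
    intro z
    have := intervalIntegral.integral_eq_sub_of_hasDerivAt
      (f := fun t => g (φ t z)) (f' := fun s => h (φ s z)) (a := 0) (b := 1)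
      (fun s _ => hderiv' z s)
      ((hh.comp (hφz z)).intervalIntegrable 0 1)
    simp only [this, hφ0]
  have integrable_of_cont : ∀ (u : M → ℝ), Continuous u → Integrable u m := by
    intro u hu
    exact hu.integrable_of_hasCompactSupport (HasCompactSupport.of_compactSpace u)
  have φhomeo : ∀ t : ℝ, Continuous (φ t) := fun t =>
    hφcont.comp (continuous_const.prodMk continuous_id)
  let e : Homeomorph M M :=
    { toFun := φ 1
      invFun := φ (-1)
      left_inv := fun z => by rw [← hφadd]; norm_num [hφ0]
      right_inv := fun z => by rw [← hφadd]; norm_num [hφ0]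
      continuous_toFun := φhomeo 1
      continuous_invFun := φhomeo (-1) }
  have hcomp1 : ∫ z, g (φ 1 z) ∂m = ∫ z, g z ∂m :=
    (hm 1).integral_comp e.measurableEmbedding g
  obtain ⟨C, hC⟩ : ∃ C, ∀ z, ‖h z‖ ≤ C := by
    obtain ⟨C, hC⟩ := (isCompact_univ (X := M)).exists_bound_of_continuousOn
      hh.continuousOn
    exact ⟨C, fun z => hC z (Set.mem_univ z)⟩
  have hswap :
      ∫ z, (∫ s in Set.Ioc (0:ℝ) 1, h (φ s z)) ∂m
        = ∫ s in Set.Ioc (0:ℝ) 1, (∫ z, h (φ s z) ∂m) := by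
    apply MeasureTheory.integral_integral_swap
    have hcont2 : Continuous fun p : M × ℝ => h (φ p.2 p.1) :=
      hh.comp (hφcont.comp continuous_swap)
    refine (integrable_const C).mono' hcont2.aestronglyMeasurable ?_
    exact Filter.Eventually.of_forall fun p => hC _
  have hinner : ∀ s : ℝ, ∫ z, h (φ s z) ∂m = ∫ z, h z ∂m := by
    intro s
    let es : Homeomorph M M :=
      { toFun := φ s
        invFun := φ (-s)
        left_inv := fun z => by rw [← hφadd]; norm_num [hφ0]
        right_inv := fun z => by rw [← hφadd]; norm_num [hφ0]
        continuous_toFun := φhomeo s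
        continuous_invFun := φhomeo (-s) }
    exact (hm s).integral_comp es.measurableEmbedding h
  have lhs : ∫ z, (∫ s in Set.Ioc (0:ℝ) 1, h (φ s z)) ∂m = 0 := by
    have heq : ∀ z : M, (∫ s in Set.Ioc (0:ℝ) 1, h (φ s z)) = g (φ 1 z) - g z := by
      intro z
      rw [← key z, intervalIntegral.integral_of_le zero_le_one]
    rw [integral_congr_ae (Filter.Eventually.of_forall heq)]
    rw [integral_sub (integrable_of_cont (fun a => g (φ 1 a)) (hg.comp (φhomeo 1)))
      (integrable_of_cont g hg), hcomp1, sub_self]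
  rw [hswap] at lhs
  have hfin : ∫ s in Set.Ioc (0:ℝ) 1, (∫ z, h (φ s z) ∂m) = ∫ z, h z ∂m := by
    rw [setIntegral_congr_fun measurableSet_Ioc (fun s _ => hinner s)]
    simp
  rw [hfin] at lhs
  exact lhs

/-- Let `m` be a finite flow-invariant Borel measure, `U₋` a continuous
vector field with divergence `D` with respect to `m` (i.e. `∫ U₋f dm = −∫ D f dm` for all
smooth `f`) satisfying the commutation relation `X(U₋f) = U₋(Xf) − r₋·(U₋f)`.  Then `D` is a
weak solution of `(−X − r₋)D = U₋(r₋)`: for every smooth `f`,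
`∫ D·(Xf − r₋ f) dm = −∫ r₋·(U₋f + D f) dm`. -/
theorem stmt_12
    {E : Type*} [NormedAddCommGroup E] [NormedSpace ℝ E]
    {HM : Type*} [TopologicalSpace HM] {I : ModelWithCorners ℝ E HM} [I.Boundaryless]
    {M : Type*} [TopologicalSpace M] [ChartedSpace HM M] [IsManifold I (⊤ : ℕ∞) M]
    [CompactSpace M] [MeasurableSpace M] [BorelSpace M]
    (X : ∀ z : M, TangentSpace I z)
    (hX : ContMDiff I I.tangent (⊤ : ℕ∞) fun z => (⟨z, X z⟩ : TangentBundle I M))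
    (φ : ℝ → M → M)
    (hφ0 : ∀ z, φ 0 z = z)
    (hφadd : ∀ t s z, φ (t + s) z = φ t (φ s z))
    (hφsmooth : ContMDiff (𝓘(ℝ).prod I) I (⊤ : ℕ∞) fun p : ℝ × M => φ p.1 p.2)
    (hφflow : ∀ z : M, IsMIntegralCurve (fun t => φ t z) X)
    (m : Measure M) [IsFiniteMeasure m]
    (hm : ∀ t : ℝ, MeasurePreserving (φ t) m m)
    (Um : ∀ z : M, TangentSpace I z)
    (hUm : Continuous fun z => (⟨z, Um z⟩ : TangentBundle I M))
    (rm : M → ℝ) (hrm : Continuous rm)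
    (D : M → ℝ) (hD : Continuous D)
    (hdiv : ∀ f : M → ℝ, ContMDiff I 𝓘(ℝ) (⊤ : ℕ∞) f →
      ∫ z, (show ℝ from mfderiv I 𝓘(ℝ) f z (Um z)) ∂m = -∫ z, D z * f z ∂m)
    (hcomm : ∀ f : M → ℝ, ContMDiff I 𝓘(ℝ) (⊤ : ℕ∞) f → ∀ z : M,
      HasDerivAt (fun t => (show ℝ from mfderiv I 𝓘(ℝ) f (φ t z) (Um (φ t z))))
        ((show ℝ from mfderiv I 𝓘(ℝ)
            (fun w => (show ℝ from mfderiv I 𝓘(ℝ) f w (X w))) z (Um z))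
          - rm z * (show ℝ from mfderiv I 𝓘(ℝ) f z (Um z))) 0)
    (hcont : ∀ f : M → ℝ, ContMDiff I 𝓘(ℝ) (⊤ : ℕ∞) f →
      Continuous fun z : M =>
        (show ℝ from mfderiv I 𝓘(ℝ)
            (fun w => (show ℝ from mfderiv I 𝓘(ℝ) f w (X w))) z (Um z))
          - rm z * (show ℝ from mfderiv I 𝓘(ℝ) f z (Um z))) :
    ∀ f : M → ℝ, ContMDiff I 𝓘(ℝ) (⊤ : ℕ∞) f →
      ∫ z, D z * ((show ℝ from mfderiv I 𝓘(ℝ) f z (X z)) - rm z * f z) ∂m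
        = -∫ z, rm z * ((show ℝ from mfderiv I 𝓘(ℝ) f z (Um z)) + D z * f z) ∂m := by
  intro f hf
  set Xf : M → ℝ := fun z => (show ℝ from mfderiv I 𝓘(ℝ) f z (X z)) with hXf_def
  set Uf : M → ℝ := fun z => (show ℝ from mfderiv I 𝓘(ℝ) f z (Um z)) with hUf_def
  set UXf : M → ℝ := fun z => (show ℝ from mfderiv I 𝓘(ℝ) Xf z (Um z)) with hUXf_def
  have hXf_smooth : ContMDiff I 𝓘(ℝ) (⊤ : ℕ∞) Xf := Xf_smooth' f hf X hX
  have hXf_cont : Continuous Xf := hXf_smooth.continuous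
  have hUf_cont : Continuous Uf := Xf_cont' f hf Um hUm
  have hf_cont : Continuous f := hf.continuous
  have hh_cont : Continuous (fun z => UXf z - rm z * Uf z) := hcont f hf
  have hUXf_cont : Continuous UXf := by
    have : UXf = fun z => (UXf z - rm z * Uf z) + rm z * Uf z := by funext z; ring
    rw [this]
    exact hh_cont.add (hrm.mul hUf_cont)
  have integrable_of_cont : ∀ (u : M → ℝ), Continuous u → Integrable u m := by
    intro u hu
    exact hu.integrable_of_hasCompactSupport (HasCompactSupport.of_compactSpace u)
  -- flow invariance gives ∫ (UXf - rm * Uf) = 0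
  have hzero : ∫ z, (UXf z - rm z * Uf z) ∂m = 0 := by
    apply flow_integral_zero φ hφ0 hφadd hφsmooth.continuous m hm Uf
      (fun z => UXf z - rm z * Uf z) hUf_cont hh_cont
    intro z
    exact hcomm f hf z
  have hsplit : ∫ z, UXf z ∂m = ∫ z, rm z * Uf z ∂m := by
    have h2 := integral_sub (integrable_of_cont (fun z => UXf z) hUXf_cont)
      (integrable_of_cont (fun z => rm z * Uf z) (hrm.mul hUf_cont))
    rw [h2] at hzero
    linarith
  -- divergence identity applied to Xf
  have hdivXf : ∫ z, UXf z ∂m = -∫ z, D z * Xf z ∂m := hdiv Xf hXf_smooth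
  -- key identity
  have hkey : ∫ z, D z * Xf z ∂m = -∫ z, rm z * Uf z ∂m := by
    rw [← hsplit, hdivXf]; ring
  -- expand both sides of the goal
  have int_DXf := integrable_of_cont (fun z => D z * Xf z) (hD.mul hXf_cont)
  have int_Drf := integrable_of_cont (fun z => D z * (rm z * f z))
    (hD.mul (hrm.mul hf_cont))
  have int_rUf := integrable_of_cont (fun z => rm z * Uf z) (hrm.mul hUf_cont)
  have int_rDf := integrable_of_cont (fun z => rm z * (D z * f z))
    (hrm.mul (hD.mul hf_cont))
  have eL : ∫ z, D z * (Xf z - rm z * f z) ∂m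
      = ∫ z, D z * Xf z ∂m - ∫ z, D z * (rm z * f z) ∂m := by
    rw [← integral_sub int_DXf int_Drf]
    congr 1; funext z; ring
  have eR : ∫ z, rm z * (Uf z + D z * f z) ∂m
      = ∫ z, rm z * Uf z ∂m + ∫ z, rm z * (D z * f z) ∂m := by
    rw [← integral_add int_rUf int_rDf]
    congr 1; funext z; ring
  have eC : ∫ z, D z * (rm z * f z) ∂m = ∫ z, rm z * (D z * f z) ∂m := by
    congr 1; funext z; ring
  rw [eL, eR, eC, hkey]
  ring
end

section
/- Let M be a compact smooth manifold without boundary, X a smooth vector field with flow φ_t. Let U_+, U_- be continuous nowhere-vanishing vector fields and r_+, r_- : M → ℝ continuous functions with dφ_t(z)·U_+(z) = exp(−∫_0^t r_+(φ_s(z)) ds)·U_+(φ_t(z)) and dφ_t(z)·U_-(z) = exp(∫_0^t r_-(φ_s(z)) ds)·U_-(φ_t(z)) for all t, z. Let β be a continuous 2-form on M invariant under the flow (β_{φ_t(z)}(dφ_t(z)u, dφ_t(z)v) = β_z(u,v) for all t, z, u, v ∈ T_zM) such that g(z) := β_z(U_+(z), U_-(z)) is nowhere vanishing. Then there exists C ≥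 1 such that C^{-1} ≤ exp(∫_0^t (r_-(φ_s(z)) − r_+(φ_s(z))) ds) ≤ C for all t ∈ ℝ and z ∈ M; consequently (1/t)∫_0^t (r_- − r_+)(φ_s(z)) ds → 0 uniformly in z as t → +∞, and the expansion rates agree: lim_{t→∞} sup_z (1/t)∫_0^t r_-∘φ_s ds = lim_{t→∞} sup_z (1/t)∫_0^t r_+∘φ_s ds and lim_{t→∞} inf_z (1/t)∫_0^t r_-∘φ_s ds = lim_{t→∞} inf_z (1/t)∫_0^t r_+∘φ_s ds. -/
open Filter
open scoped Manifold Topology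

private lemma aux_tendsto_iff {a b : ℝ → ℝ} {L : ℝ}
    (h : Tendsto (fun t => a t - b t) atTop (𝓝 0)) :
    Tendsto a atTop (𝓝 L) ↔ Tendsto b atTop (𝓝 L) := by
  constructor
  · intro ha
    have h2 := ha.sub h
    have heq : (fun t => a t - (a t - b t)) = b := by funext t; ring
    rw [heq] at h2
    simpa using h2
  · intro hb
    have h2 := hb.add h
    have heq : (fun t => b t + (a t - b t)) = a := by funext t; ring
    rw [heq] at h2
    simpa using h2

private lemma aux_abs_ciSup_sub {M : Type*} [Nonempty M] (f g : M → ℝ)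
    (hf : BddAbove (Set.range f)) (hg : BddAbove (Set.range g)) {d : ℝ}
    (h : ∀ z, |f z - g z| ≤ d) :
    |(⨆ z, f z) - ⨆ z, g z| ≤ d := by
  have h1 : (⨆ z, f z) ≤ (⨆ z, g z) + d := by
    refine ciSup_le fun z => ?_
    have h3 := abs_le.1 (h z)
    have h4 := le_ciSup hg z
    linarith [h3.2]
  have h2 : (⨆ z, g z) ≤ (⨆ z, f z) + d := by
    refine ciSup_le fun z => ?_
    have h3 := abs_le.1 (h z)
    have h4 := le_ciSup hf z
    linarith [h3.1]
  rw [abs_le]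
  constructor <;> linarith

private lemma aux_abs_ciInf_sub {M : Type*} [Nonempty M] (f g : M → ℝ)
    (hf : BddBelow (Set.range f)) (hg : BddBelow (Set.range g)) {d : ℝ}
    (h : ∀ z, |f z - g z| ≤ d) :
    |(⨅ z, f z) - ⨅ z, g z| ≤ d := by
  have h1 : (⨅ z, g z) - d ≤ ⨅ z, f z := by
    refine le_ciInf fun z => ?_
    have h3 := abs_le.1 (h z)
    have h4 := ciInf_le hg z
    linarith [h3.2]
  have h2 : (⨅ z, f z) - d ≤ ⨅ z, g z := by
    refine le_ciInf fun z => ?_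
    have h3 := abs_le.1 (h z)
    have h4 := ciInf_le hf z
    linarith [h3.1]
  rw [abs_le]
  constructor <;> linarith

/-- Suppose `U₊, U₋` are continuous nowhere-vanishing vector fields with
`dφ_t·U₊ = e^{−∫_0^t r₊∘φ_s ds} U₊∘φ_t` and `dφ_t·U₋ = e^{∫_0^t r₋∘φ_s ds} U₋∘φ_t`, and `β`
is a continuous flow-invariant `2`-form such that `g(z) = β_z(U₊(z),U₋(z))` is continuous and
nowhere vanishing.  Then `exp(∫_0^t (r₋−r₊)∘φ_s ds)` is bounded above and below uniformly
in `t` and `z`, `(1/t)∫_0^t (r₋−r₊)∘φ_s ds → 0` uniformly, and the maximal/minimal expansion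
rates of `r₋` and `r₊` agree. -/
theorem stmt_16
    {E : Type*} [NormedAddCommGroup E] [NormedSpace ℝ E]
    {HM : Type*} [TopologicalSpace HM] {I : ModelWithCorners ℝ E HM} [I.Boundaryless]
    {M : Type*} [TopologicalSpace M] [ChartedSpace HM M] [IsManifold I (⊤ : ℕ∞) M]
    [CompactSpace M] [Nonempty M]
    (X : ∀ z : M, TangentSpace I z)
    (hX : ContMDiff I I.tangent (⊤ : ℕ∞) fun z => (⟨z, X z⟩ : TangentBundle I M))
    (φ : ℝ → M → M)
    (hφ0 : ∀ z, φ 0 z = z)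
    (hφadd : ∀ t s z, φ (t + s) z = φ t (φ s z))
    (hφsmooth : ContMDiff (𝓘(ℝ).prod I) I (⊤ : ℕ∞) fun p : ℝ × M => φ p.1 p.2)
    (hφflow : ∀ z : M, IsMIntegralCurve (fun t => φ t z) X)
    (Up Um : ∀ z : M, TangentSpace I z)
    (hUp : Continuous fun z => (⟨z, Up z⟩ : TangentBundle I M))
    (hUm : Continuous fun z => (⟨z, Um z⟩ : TangentBundle I M))
    (hUp0 : ∀ z, Up z ≠ 0) (hUm0 : ∀ z, Um z ≠ 0)
    (rp rm : M → ℝ) (hrp : Continuous rp) (hrm : Continuous rm)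
    (hconjp : ∀ (t : ℝ) (z : M), mfderiv I I (φ t) z (Up z) =
      Real.exp (-∫ s in (0:ℝ)..t, rp (φ s z)) • Up (φ t z))
    (hconjm : ∀ (t : ℝ) (z : M), mfderiv I I (φ t) z (Um z) =
      Real.exp (∫ s in (0:ℝ)..t, rm (φ s z)) • Um (φ t z))
    (β : M → E →L[ℝ] E →L[ℝ] ℝ) (hβcont : Continuous β)
    (hβalt : ∀ (z : M) (u v : E), β z u v = -β z v u)
    (hβinv : ∀ (t : ℝ) (z : M) (u v : TangentSpace I z),
      β (φ t z) (show E from mfderiv I I (φ t) z u) (show E from mfderiv I I (φ t) z v)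
        = β z (show E from u) (show E from v))
    (hgcont : Continuous fun z : M => β z (show E from Up z) (show E from Um z))
    (hg : ∀ z : M, β z (show E from Up z) (show E from Um z) ≠ 0) :
    (∃ C : ℝ, 1 ≤ C ∧ ∀ (t : ℝ) (z : M),
      C⁻¹ ≤ Real.exp (∫ s in (0:ℝ)..t, (rm (φ s z) - rp (φ s z))) ∧
      Real.exp (∫ s in (0:ℝ)..t, (rm (φ s z) - rp (φ s z))) ≤ C) ∧
    TendstoUniformly
      (fun t : ℝ => fun z : M => (1/t) * ∫ s in (0:ℝ)..t, (rm (φ s z) - rp (φ s z)))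
      (fun _ => 0) atTop ∧
    (∀ L : ℝ,
      Tendsto (fun t : ℝ => ⨆ z : M, (1/t) * ∫ s in (0:ℝ)..t, rm (φ s z)) atTop (𝓝 L) ↔
      Tendsto (fun t : ℝ => ⨆ z : M, (1/t) * ∫ s in (0:ℝ)..t, rp (φ s z)) atTop (𝓝 L)) ∧
    (∀ L : ℝ,
      Tendsto (fun t : ℝ => ⨅ z : M, (1/t) * ∫ s in (0:ℝ)..t, rm (φ s z)) atTop (𝓝 L) ↔
      Tendsto (fun t : ℝ => ⨅ z : M, (1/t) * ∫ s in (0:ℝ)..t, rp (φ s z)) atTop (𝓝 L)) := by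
  classical
  set g : M → ℝ := fun z => β z (show E from Up z) (show E from Um z) with hgdef
  -- continuity of the orbit map
  have horb : ∀ z : M, Continuous fun s : ℝ => φ s z := fun z =>
    hφsmooth.continuous.comp (continuous_id.prodMk continuous_const)
  -- integrability
  have hint : ∀ (f : M → ℝ), Continuous f → ∀ (t : ℝ) (z : M),
      IntervalIntegrable (fun s => f (φ s z)) MeasureTheory.volume 0 t := fun f hf t z =>
    (hf.comp (horb z)).intervalIntegrable 0 t
  -- the key identity
  have hkey : ∀ (t : ℝ) (z : M),
      Real.exp (∫ s in (0:ℝ)..t, (rm (φ s z) - rp (φ s z))) * g (φ t z) = g z := by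
    intro t z
    have h1 := hβinv t z (Up z) (Um z)
    dsimp only at h1
    rw [hconjp, hconjm] at h1
    have hinteq : (∫ s in (0:ℝ)..t, (rm (φ s z) - rp (φ s z)))
        = (∫ s in (0:ℝ)..t, rm (φ s z)) - ∫ s in (0:ℝ)..t, rp (φ s z) :=
      intervalIntegral.integral_sub (hint rm hrm t z) (hint rp hrp t z)
    rw [hinteq, Real.exp_sub]
    rw [Real.exp_neg] at h1
    erw [ContinuousLinearMap.map_smul, ContinuousLinearMap.map_smul, ContinuousLinearMap.smul_apply] at h1
    simp only [map_smul, ContinuousLinearMap.smul_apply, smul_eq_mul] at h1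
    have hgz : g z = β z (show E from Up z) (show E from Um z) := rfl
    have hgz' : g (φ t z) = β (φ t z) (show E from Up (φ t z)) (show E from Um (φ t z)) := rfl
    dsimp only at hgz hgz'
    rw [hgz, hgz', ← h1]
    have hep := Real.exp_pos (∫ s in (0:ℝ)..t, rp (φ s z))
    field_simp
  -- bounds on |g|
  obtain ⟨z0, -, hz0'⟩ := isCompact_univ.exists_isMinOn (Set.univ_nonempty)
    (continuous_abs.comp hgcont).continuousOn
  obtain ⟨z1, -, hz1'⟩ := isCompact_univ.exists_isMaxOn (Set.univ_nonempty)
    (continuous_abs.comp hgcont).continuousOn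
  have hz0 : ∀ z : M, z ∈ Set.univ → |g z0| ≤ |g z| := fun z hz => hz0' hz
  have hz1 : ∀ z : M, z ∈ Set.univ → |g z| ≤ |g z1| := fun z hz => hz1' hz
  set m : ℝ := |g z0| with hmdef
  set Mx : ℝ := |g z1| with hMdef
  have hm0 : 0 < m := abs_pos.2 (hg z0)
  have hmle : ∀ z, m ≤ |g z| := fun z => hz0 z (Set.mem_univ z)
  have hMge : ∀ z, |g z| ≤ Mx := fun z => hz1 z (Set.mem_univ z)
  have hmM : m ≤ Mx := le_trans (hmle z0) (hMge z0)
  set C : ℝ := Mx / m with hCdef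
  have hC1 : 1 ≤ C := (one_le_div hm0).2 hmM
  have hC0 : 0 < C := lt_of_lt_of_le one_pos hC1
  -- exp value equals |g z| / |g (φ t z)|
  have hexp : ∀ (t : ℝ) (z : M),
      Real.exp (∫ s in (0:ℝ)..t, (rm (φ s z) - rp (φ s z))) = |g z| / |g (φ t z)| := by
    intro t z
    have h1 := hkey t z
    have h2 : Real.exp (∫ s in (0:ℝ)..t, (rm (φ s z) - rp (φ s z))) * |g (φ t z)| = |g z| := by
      rw [← abs_of_pos (Real.exp_pos _), ← abs_mul, h1]
    have h3 : |g (φ t z)| ≠ 0 := abs_ne_zero.2 (hg (φ t z))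
    field_simp [h3] at h2 ⊢
    linarith
  have hbnd : ∀ (t : ℝ) (z : M),
      C⁻¹ ≤ Real.exp (∫ s in (0:ℝ)..t, (rm (φ s z) - rp (φ s z))) ∧
      Real.exp (∫ s in (0:ℝ)..t, (rm (φ s z) - rp (φ s z))) ≤ C := by
    intro t z
    rw [hexp t z]
    have ha := hmle z
    have hb := hMge z
    have hc := hmle (φ t z)
    have hd := hMge (φ t z)
    have he : 0 < |g (φ t z)| := abs_pos.2 (hg (φ t z))
    constructor
    · rw [hCdef, inv_div, div_le_div_iff₀ (lt_of_lt_of_le hm0 hmM) he]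
      nlinarith
    · rw [hCdef, div_le_div_iff₀ he hm0]
      nlinarith
  -- the integral bound
  have hlog : ∀ (t : ℝ) (z : M),
      |∫ s in (0:ℝ)..t, (rm (φ s z) - rp (φ s z))| ≤ Real.log C := by
    intro t z
    obtain ⟨hl, hr⟩ := hbnd t z
    rw [abs_le]
    have h1 : (∫ s in (0:ℝ)..t, (rm (φ s z) - rp (φ s z)))
        = Real.log (Real.exp (∫ s in (0:ℝ)..t, (rm (φ s z) - rp (φ s z)))) :=
      (Real.log_exp _).symm
    constructor
    · rw [h1, ← Real.log_inv]
      exact Real.log_le_log (by positivity) hl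
    · rw [h1]
      exact Real.log_le_log (Real.exp_pos _) hr
  set lC : ℝ := Real.log C with hlCdef
  have hlC0 : 0 ≤ lC := Real.log_nonneg hC1
  -- linearity of the integral
  have hinteq : ∀ (t : ℝ) (z : M), (∫ s in (0:ℝ)..t, (rm (φ s z) - rp (φ s z)))
      = (∫ s in (0:ℝ)..t, rm (φ s z)) - ∫ s in (0:ℝ)..t, rp (φ s z) := fun t z =>
    intervalIntegral.integral_sub (hint rm hrm t z) (hint rp hrp t z)
  -- uniform bound on time averages
  have hSbnd : ∀ (f : M → ℝ) (K : ℝ), (∀ z, |f z| ≤ K) → ∀ t : ℝ, 0 < t →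
      ∀ z : M, |(1/t) * ∫ s in (0:ℝ)..t, f (φ s z)| ≤ K := by
    intro f K hK t ht z
    have hK0 : 0 ≤ K := le_trans (abs_nonneg _) (hK z)
    have h2 : ‖∫ s in (0:ℝ)..t, f (φ s z)‖ ≤ K * |t - 0| :=
      intervalIntegral.norm_integral_le_of_norm_le_const fun x _ => by
        simpa using hK (φ x z)
    rw [Real.norm_eq_abs] at h2
    rw [abs_mul, abs_of_pos (by positivity : (0:ℝ) < 1/t)]
    rw [sub_zero, abs_of_pos ht] at h2
    rw [div_mul_eq_mul_div, one_mul, div_le_iff₀ ht]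
    linarith [h2]
  -- difference of time averages bound
  have hdiff : ∀ t : ℝ, 0 < t → ∀ z : M,
      |(1/t) * (∫ s in (0:ℝ)..t, rm (φ s z)) - (1/t) * ∫ s in (0:ℝ)..t, rp (φ s z)|
        ≤ lC / t := by
    intro t ht z
    have h1 : (1/t) * (∫ s in (0:ℝ)..t, rm (φ s z)) - (1/t) * ∫ s in (0:ℝ)..t, rp (φ s z)
        = (1/t) * ∫ s in (0:ℝ)..t, (rm (φ s z) - rp (φ s z)) := by
      rw [hinteq]; ring
    rw [h1, abs_mul, abs_of_pos (by positivity : (0:ℝ) < 1/t)]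
    have := hlog t z
    rw [div_eq_mul_inv lC t, mul_comm lC t⁻¹, ← one_div]
    exact mul_le_mul_of_nonneg_left this (by positivity)
  -- bounds for rp and rm
  obtain ⟨zp, -, hzp'⟩ := isCompact_univ.exists_isMaxOn (Set.univ_nonempty)
    (continuous_abs.comp hrp).continuousOn
  obtain ⟨zm, -, hzm'⟩ := isCompact_univ.exists_isMaxOn (Set.univ_nonempty)
    (continuous_abs.comp hrm).continuousOn
  have hKp : ∀ z : M, |rp z| ≤ |rp zp| := fun z => hzp' (Set.mem_univ z)
  have hKm : ∀ z : M, |rm z| ≤ |rm zm| := fun z => hzm' (Set.mem_univ z)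
  -- tendsto of lC / t
  have hlim : Tendsto (fun t : ℝ => lC / t) atTop (𝓝 0) := by
    have := tendsto_inv_atTop_zero.const_mul lC
    simpa [div_eq_mul_inv] using this
  refine ⟨⟨C, hC1, hbnd⟩, ?_, ?_, ?_⟩
  · -- uniform convergence
    rw [Metric.tendstoUniformly_iff]
    intro ε hε
    filter_upwards [eventually_gt_atTop (max 0 (lC / ε))] with t ht z
    have ht0 : 0 < t := lt_of_le_of_lt (le_max_left _ _) ht
    have ht1 : lC / ε < t := lt_of_le_of_lt (le_max_right _ _) ht
    have h2 : lC < ε * t := by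
      have := (div_lt_iff₀ hε).1 ht1
      linarith [this]
    have h3 : |(1/t) * ∫ s in (0:ℝ)..t, (rm (φ s z) - rp (φ s z))| ≤ lC / t := by
      rw [abs_mul, abs_of_pos (by positivity : (0:ℝ) < 1/t)]
      have := hlog t z
      rw [div_eq_mul_inv lC t, mul_comm lC t⁻¹, ← one_div]
      exact mul_le_mul_of_nonneg_left this (by positivity)
    have h4 : lC / t < ε := (div_lt_iff₀ ht0).2 (by linarith)
    calc dist 0 ((1/t) * ∫ s in (0:ℝ)..t, (rm (φ s z) - rp (φ s z)))
        = |(1/t) * ∫ s in (0:ℝ)..t, (rm (φ s z) - rp (φ s z))| := by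
          rw [dist_comm, Real.dist_eq, sub_zero]
      _ < ε := lt_of_le_of_lt h3 h4
  · -- sup limits agree
    intro L
    refine aux_tendsto_iff ?_
    refine squeeze_zero_norm' ?_ hlim
    filter_upwards [eventually_gt_atTop (0:ℝ)] with t ht
    rw [Real.norm_eq_abs]
    refine aux_abs_ciSup_sub _ _ ?_ ?_ (hdiff t ht)
    · exact ⟨|rm zm|, by rintro x ⟨z, rfl⟩; exact (abs_le.1 (hSbnd rm _ hKm t ht z)).2⟩
    · exact ⟨|rp zp|, by rintro x ⟨z, rfl⟩; exact (abs_le.1 (hSbnd rp _ hKp t ht z)).2⟩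
  · -- inf limits agree
    intro L
    refine aux_tendsto_iff ?_
    refine squeeze_zero_norm' ?_ hlim
    filter_upwards [eventually_gt_atTop (0:ℝ)] with t ht
    rw [Real.norm_eq_abs]
    refine aux_abs_ciInf_sub _ _ ?_ ?_ (hdiff t ht)
    · exact ⟨-|rm zm|, by rintro x ⟨z, rfl⟩; exact (abs_le.1 (hSbnd rm _ hKm t ht z)).1⟩
    · exact ⟨-|rp zp|, by rintro x ⟨z, rfl⟩; exact (abs_le.1 (hSbnd rp _ hKp t ht z)).1⟩
end
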